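/- arXiv:2509.10337 — 3 statements merged into one kernel-verified Lean document; each statement's English description precedes it below -/
import Mathlib

section
/- For any c > 0 and a > 1, the improper integral ∫₀^∞ (x^{−a}·c²)/(x^{−a}+c)² dx is finite and equals a constant depending only on a times c^{(a−1)/a}. -/
open MeasureTheory Set

lemma f_meas (a : ℝ) : Measurable (fun y : ℝ => y ^ (-a) / (y ^ (-a) + 1) ^ 2) := by
  have h1 : Measurable (fun y : ℝ => y ^ (-a)) := by fun_prop
  exact h1.div ((h1.add measurable_const).pow measurable_const)

lemma f_intble (a : ℝ) (ha : 1 < a) :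
    IntegrableOn (fun y : ℝ => y ^ (-a) / (y ^ (-a) + 1) ^ 2) (Ioi 0) := by
  have hmeas := f_meas a
  have h01 : IntegrableOn (fun y : ℝ => y ^ (-a) / (y ^ (-a) + 1) ^ 2) (Ioc 0 1) := by
    refine Integrable.mono' (g := fun _ : ℝ => (1 : ℝ)) (integrable_const 1)
      hmeas.aestronglyMeasurable.restrict ?_
    filter_upwards [ae_restrict_mem measurableSet_Ioc] with y hy
    have hy0 : (0:ℝ) < y ^ (-a) := Real.rpow_pos_of_pos hy.1 _
    rw [Real.norm_eq_abs, abs_of_nonneg (by positivity)]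
    rw [div_le_one (by positivity)]
    nlinarith [sq_nonneg (y ^ (-a))]
  have h1i : IntegrableOn (fun y : ℝ => y ^ (-a) / (y ^ (-a) + 1) ^ 2) (Ioi 1) := by
    refine Integrable.mono' (g := fun y : ℝ => y ^ (-a))
      (integrableOn_Ioi_rpow_of_lt (by linarith) one_pos)
      hmeas.aestronglyMeasurable.restrict ?_
    filter_upwards [ae_restrict_mem measurableSet_Ioi] with y hy
    have hy0 : (0:ℝ) < y ^ (-a) := Real.rpow_pos_of_pos (lt_trans one_pos hy) _
    rw [Real.norm_eq_abs, abs_of_nonneg (by positivity)]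
    rw [div_le_iff₀ (by positivity)]
    nlinarith [sq_nonneg (y ^ (-a))]
  have := h01.union h1i
  rwa [Ioc_union_Ioi_eq_Ioi (le_of_lt one_pos)] at this

/-- For `a > 1`, `∫₀^∞ x^{-a} c² / (x^{-a} + c)² dx` is finite and equals a constant
depending only on `a` times `c^{(a-1)/a}`, for every `c > 0`. -/
theorem stmt2 (a : ℝ) (ha : 1 < a) :
    ∃ C : ℝ, ∀ c : ℝ, 0 < c →
      IntegrableOn (fun x : ℝ => x ^ (-a) * c ^ 2 / (x ^ (-a) + c) ^ 2) (Ioi 0) ∧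
      ∫ x in Ioi (0 : ℝ), x ^ (-a) * c ^ 2 / (x ^ (-a) + c) ^ 2 =
        C * c ^ ((a - 1) / a) := by
  have ha0 : (0:ℝ) < a := lt_trans one_pos ha
  refine ⟨∫ y in Ioi (0:ℝ), y ^ (-a) / (y ^ (-a) + 1) ^ 2, fun c hc => ?_⟩
  set k : ℝ := c ^ (a⁻¹) with hk
  have hkpos : 0 < k := Real.rpow_pos_of_pos hc _
  -- key pointwise identity on Ioi 0
  have key : ∀ x ∈ Ioi (0:ℝ),
      x ^ (-a) * c ^ 2 / (x ^ (-a) + c) ^ 2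
        = c * ((k * x) ^ (-a) / ((k * x) ^ (-a) + 1) ^ 2) := by
    intro x hx
    have hx0 : (0:ℝ) < x := hx
    have hkx : (k * x) ^ (-a) = c⁻¹ * x ^ (-a) := by
      rw [Real.mul_rpow hkpos.le hx0.le, hk, ← Real.rpow_mul hc.le,
        show a⁻¹ * (-a) = -1 by field_simp, Real.rpow_neg_one]
    rw [hkx]
    have hxa : (0:ℝ) < x ^ (-a) := Real.rpow_pos_of_pos hx0 _
    field_simp
  -- integrability
  have hint : IntegrableOn (fun x : ℝ => x ^ (-a) * c ^ 2 / (x ^ (-a) + c) ^ 2) (Ioi 0) := by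
    have h1 : IntegrableOn (fun x : ℝ => c * ((k * x) ^ (-a) / ((k * x) ^ (-a) + 1) ^ 2))
        (Ioi 0) := by
      have := (integrableOn_Ioi_comp_mul_left_iff
        (fun y : ℝ => y ^ (-a) / (y ^ (-a) + 1) ^ 2) 0 hkpos).2
        (by rw [mul_zero]; exact f_intble a ha)
      exact this.const_mul c
    exact h1.congr_fun (fun x hx => (key x hx).symm) measurableSet_Ioi
  refine ⟨hint, ?_⟩
  rw [setIntegral_congr_fun measurableSet_Ioi (fun x hx => key x hx)]
  rw [integral_const_mul, integral_comp_mul_left_Ioi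
    (fun y : ℝ => y ^ (-a) / (y ^ (-a) + 1) ^ 2) 0 hkpos, mul_zero]
  have hck : c * k⁻¹ = c ^ ((a - 1) / a) := by
    rw [hk, ← Real.rpow_neg_one (c ^ a⁻¹), ← Real.rpow_mul hc.le]
    nth_rewrite 1 [← Real.rpow_one c]
    rw [← Real.rpow_add hc]
    congr 1
    field_simp
    ring
  rw [smul_eq_mul, ← mul_assoc, hck, mul_comm]
end

section
/- For any c > 0 and exponents a > 1, b with 1 < b < 1 + 2a, the improper integral ∫₀^∞ (x^{−b}·c²)/(x^{−a}+c)² dx is finite and scales, up to constants depending only on a and b, as c^{(b−1)/a}. -/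
open MeasureTheory Set Real

section aux

variable {a b : ℝ}

private noncomputable def ff (a b : ℝ) (y : ℝ) : ℝ := y ^ (-b) / (y ^ (-a) + 1) ^ 2

private lemma ff_contOn : ContinuousOn (ff a b) (Ioi 0) := by
  apply ContinuousOn.div
  · exact fun y hy => (Real.continuousAt_rpow_const y (-b) (Or.inl (ne_of_gt hy))).continuousWithinAt
  · exact ContinuousOn.pow (ContinuousOn.add (fun y hy =>
      (Real.continuousAt_rpow_const y (-a) (Or.inl (ne_of_gt hy))).continuousWithinAt)
      continuousOn_const) 2
  · intro y hy
    have h0 : (0:ℝ) < y ^ (-a) := rpow_pos_of_pos (mem_Ioi.mp hy) _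
    have : (0:ℝ) < y ^ (-a) + 1 := by linarith
    exact pow_ne_zero 2 this.ne'

private lemma ff_pos {y : ℝ} (hy : 0 < y) : 0 < ff a b y := by
  have h1 : (0:ℝ) < y ^ (-b) := rpow_pos_of_pos hy _
  have h2 : (0:ℝ) < y ^ (-a) + 1 := by positivity
  exact div_pos h1 (by positivity)

private lemma ff_integrable (ha : 1 < a) (hb1 : 1 < b) (hb2 : b < 1 + 2 * a) :
    IntegrableOn (ff a b) (Ioi 0) := by
  have hmeas : ∀ s ⊆ Ioi (0:ℝ), MeasurableSet s → AEStronglyMeasurable (ff a b) (volume.restrict s) :=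
    fun s hs hms => (ff_contOn.mono hs).aestronglyMeasurable hms
  have h01 : IntegrableOn (ff a b) (Ioc 0 1) := by
    have hg : IntegrableOn (fun y : ℝ => y ^ (2*a - b)) (Ioc 0 1) := by
      have := intervalIntegral.intervalIntegrable_rpow' (a := 0) (b := 1) (r := 2*a - b)
        (by linarith)
      simpa [intervalIntegrable_iff_integrableOn_Ioc_of_le zero_le_one] using this
    refine hg.integrable.mono (hmeas _ Ioc_subset_Ioi_self measurableSet_Ioc) ?_
    filter_upwards [ae_restrict_mem measurableSet_Ioc] with y hy
    obtain ⟨hy0, hy1⟩ := hy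
    have hya : (0:ℝ) < y ^ (-a) := rpow_pos_of_pos hy0 _
    have hden : (y ^ (-a)) ^ 2 ≤ (y ^ (-a) + 1) ^ 2 := by nlinarith
    have h1 : ff a b y ≤ y ^ (-b) / (y ^ (-a)) ^ 2 := by
      apply div_le_div_of_nonneg_left (rpow_pos_of_pos hy0 _).le (by positivity) hden
    have h2 : y ^ (-b) / (y ^ (-a)) ^ 2 = y ^ (2*a - b) := by
      rw [← Real.rpow_natCast (y ^ (-a)) 2, ← Real.rpow_mul hy0.le, ← Real.rpow_sub hy0]
      norm_num; ring_nf
    rw [Real.norm_eq_abs, Real.norm_eq_abs, abs_of_nonneg (ff_pos hy0).le,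
      abs_of_nonneg (rpow_pos_of_pos hy0 _).le]
    rw [h2] at h1; exact h1
  have h1i : IntegrableOn (ff a b) (Ioi 1) := by
    have hg : IntegrableOn (fun y : ℝ => y ^ (-b)) (Ioi 1) :=
      integrableOn_Ioi_rpow_of_lt (by linarith) one_pos
    refine hg.integrable.mono (hmeas _ (fun y hy => mem_Ioi.mpr (lt_trans one_pos (mem_Ioi.mp hy))) measurableSet_Ioi) ?_
    filter_upwards [ae_restrict_mem measurableSet_Ioi] with y hy
    have hy0 : (0:ℝ) < y := lt_trans one_pos hy
    have hden : (1:ℝ) ≤ (y ^ (-a) + 1) ^ 2 := by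
      have := (rpow_pos_of_pos hy0 (-a)).le; nlinarith
    rw [Real.norm_eq_abs, Real.norm_eq_abs, abs_of_nonneg (ff_pos hy0).le,
      abs_of_nonneg (rpow_pos_of_pos hy0 _).le]
    calc ff a b y ≤ y ^ (-b) / 1 := by
          apply div_le_div_of_nonneg_left (rpow_pos_of_pos hy0 _).le one_pos hden
      _ = y ^ (-b) := div_one _
  have : Ioi (0:ℝ) = Ioc 0 1 ∪ Ioi 1 := (Ioc_union_Ioi_eq_Ioi zero_le_one).symm
  rw [this]
  exact h01.union h1i

end aux

/-- For `a > 1`, `1 < b < 1 + 2a`, the integral `∫₀^∞ x^{-b} c² / (x^{-a} + c)² dx` is finite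
and scales, up to positive constants depending only on `a` and `b`, as `c^{(b-1)/a}`. -/
theorem stmt3 (a b : ℝ) (ha : 1 < a) (hb1 : 1 < b) (hb2 : b < 1 + 2 * a) :
    ∃ C₁ C₂ : ℝ, 0 < C₁ ∧ 0 < C₂ ∧ ∀ c : ℝ, 0 < c →
      IntegrableOn (fun x : ℝ => x ^ (-b) * c ^ 2 / (x ^ (-a) + c) ^ 2) (Ioi 0) ∧
      C₁ * c ^ ((b - 1) / a) ≤
        (∫ x in Ioi (0 : ℝ), x ^ (-b) * c ^ 2 / (x ^ (-a) + c) ^ 2) ∧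
      (∫ x in Ioi (0 : ℝ), x ^ (-b) * c ^ 2 / (x ^ (-a) + c) ^ 2) ≤
        C₂ * c ^ ((b - 1) / a) := by
  set I : ℝ := ∫ y in Ioi (0:ℝ), ff a b y with hI
  have hint : IntegrableOn (ff a b) (Ioi 0) := ff_integrable ha hb1 hb2
  have hIpos : 0 < I := by
    rw [hI]
    have hnn : ∀ᵐ y ∂(volume.restrict (Ioi (0:ℝ))), (0:ℝ→ℝ) y ≤ ff a b y := by
      filter_upwards [ae_restrict_mem measurableSet_Ioi] with y hy
      exact (ff_pos hy).le
    rw [setIntegral_pos_iff_support_of_nonneg_ae hnn hint]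
    have hsub : Ioi (0:ℝ) ⊆ Function.support (ff a b) ∩ Ioi 0 :=
      fun y hy => ⟨(ff_pos hy).ne', hy⟩
    calc (0:ENNReal) < volume (Ioi (0:ℝ)) := by simp
      _ ≤ _ := measure_mono hsub
  refine ⟨I, I, hIpos, hIpos, fun c hc => ?_⟩
  set t : ℝ := c ^ (1/a) with htdef
  have ht : 0 < t := rpow_pos_of_pos hc _
  have ha0 : a ≠ 0 := by linarith
  have hta : t ^ (-a) = c⁻¹ := by
    rw [htdef, ← Real.rpow_mul hc.le]
    rw [show 1/a * (-a) = -1 by field_simp]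
    exact Real.rpow_neg_one c
  have hkey : ∀ x ∈ Ioi (0:ℝ),
      x ^ (-b) * c ^ 2 / (x ^ (-a) + c) ^ 2 = t ^ b * ff a b (t * x) := by
    intro x hx
    have hx0 : (0:ℝ) < x := hx
    have h1 : (t * x) ^ (-b) = t ^ (-b) * x ^ (-b) := Real.mul_rpow ht.le hx0.le
    have h2 : (t * x) ^ (-a) = c⁻¹ * x ^ (-a) := by
      rw [Real.mul_rpow ht.le hx0.le, hta]
    rw [ff, h1, h2]
    have htb : t ^ b * t ^ (-b) = 1 := by
      rw [← Real.rpow_add ht]; simp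
    have hxa : (0:ℝ) < x ^ (-a) := rpow_pos_of_pos hx0 _
    have hden : c⁻¹ * x ^ (-a) + 1 ≠ 0 := by positivity
    have hden2 : x ^ (-a) + c ≠ 0 := by positivity
    field_simp
    ring_nf
    exact htb.symm
  have hintc : IntegrableOn (fun x : ℝ => t ^ b * ff a b (t * x)) (Ioi 0) := by
    apply Integrable.const_mul
    exact (integrableOn_Ioi_comp_mul_left_iff (ff a b) 0 ht).mpr (by simpa using hint)
  have hint' : IntegrableOn (fun x : ℝ => x ^ (-b) * c ^ 2 / (x ^ (-a) + c) ^ 2) (Ioi 0) :=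
    hintc.congr_fun (fun x hx => (hkey x hx).symm) measurableSet_Ioi
  have hval : (∫ x in Ioi (0:ℝ), x ^ (-b) * c ^ 2 / (x ^ (-a) + c) ^ 2) = I * c ^ ((b-1)/a) := by
    rw [setIntegral_congr_fun measurableSet_Ioi hkey]
    rw [MeasureTheory.integral_const_mul]
    rw [integral_comp_mul_left_Ioi (ff a b) 0 ht]
    rw [mul_zero, smul_eq_mul, ← hI]
    rw [show t ^ b * (t⁻¹ * I) = I * (t ^ b * t⁻¹) by ring]
    congr 1
    rw [← Real.rpow_neg_one t, ← Real.rpow_add ht, htdef, ← Real.rpow_mul hc.le]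
    congr 1
    field_simp
    ring
  exact ⟨hint', le_of_eq (by rw [hval]), le_of_eq (by rw [hval])⟩
end

section
/- Fix s₁,…,s_m ≥ 0 (not all equal) and c > 0. Define F(t) = Σ_{i=1}^m [ t·c/(t+c) − (t − sᵢ)·c²/(t+c)² ] for t ≥ 0. Then F is minimized at t = (1/m)Σᵢ sᵢ, and the minimum value equals (Σᵢ sᵢ)·c / ( (1/m)Σᵢ sᵢ + c ). -/
open Finset

/-- The best single spectral value for a group of repeated eigenvalues: for `sᵢ ≥ 0` not all
equal and `c > 0`, `F(t) = Σᵢ [tc/(t+c) − (t − sᵢ)c²/(t+c)²]` is minimized over `t ≥ 0` at the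
mean `t = (1/m)Σᵢ sᵢ`, with minimum value `(Σᵢ sᵢ)·c / ((1/m)Σᵢ sᵢ + c)`. -/
theorem stmt9 (m : ℕ) (s : Fin m → ℝ) (hs : ∀ i, 0 ≤ s i)
    (hne : ∃ i j, s i ≠ s j) (c : ℝ) (hc : 0 < c)
    (F : ℝ → ℝ)
    (hF : ∀ t, F t = ∑ i, (t * c / (t + c) - (t - s i) * c ^ 2 / (t + c) ^ 2)) :
    (∀ t, 0 ≤ t → F ((∑ i, s i) / m) ≤ F t) ∧
    F ((∑ i, s i) / m) = (∑ i, s i) * c / ((∑ i, s i) / m + c) := by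
  obtain ⟨i0, -, -⟩ := hne
  have hm : 0 < (m : ℝ) := by exact_mod_cast i0.pos
  set S : ℝ := ∑ i, s i with hSdef
  have hS : 0 ≤ S := Finset.sum_nonneg fun i _ => hs i
  have hμ : 0 ≤ S / m := div_nonneg hS hm.le
  -- closed form of F on nonnegative reals
  have key : ∀ t : ℝ, 0 ≤ t → F t = c * ((m : ℝ) * t ^ 2 + S * c) / (t + c) ^ 2 := by
    intro t ht
    have htc : t + c ≠ 0 := by positivity
    rw [hF]
    have hterm : ∀ i : Fin m,
        t * c / (t + c) - (t - s i) * c ^ 2 / (t + c) ^ 2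
          = c * t ^ 2 / (t + c) ^ 2 + s i * (c ^ 2 / (t + c) ^ 2) := by
      intro i
      field_simp
      ring
    rw [Finset.sum_congr rfl fun i _ => hterm i, Finset.sum_add_distrib,
      Finset.sum_const, ← Finset.sum_mul]
    simp only [Finset.card_univ, Fintype.card_fin, nsmul_eq_mul, ← hSdef]
    field_simp
  have hmin : F (S / m) = S * c / (S / m + c) := by
    rw [key _ hμ]
    have h1 : S / m + c ≠ 0 := by positivity
    field_simp
  refine ⟨fun t ht => ?_, hmin⟩
  rw [hmin, key t ht]
  have h1 : 0 < S / m + c := by positivity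
  have h2 : 0 < (t + c) ^ 2 := by positivity
  rw [div_le_div_iff₀ h1 h2]
  have hmc : S / m + c = (S + m * c) / m := by field_simp
  rw [hmc]
  rw [mul_div_assoc', le_div_iff₀ hm]
  nlinarith [mul_nonneg (mul_pos hc hc).le (sq_nonneg ((m : ℝ) * t - S)), hc.le, ht]
end
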